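/- Theorem 1 (invariance of the optimal Q-function): for a group-invariant POMDP, suppose Q* : H × A → ℝ is bounded, satisfies the Bellman optimality equation Q* = B Q*, and is the unique such bounded solution (i.e., every bounded Q with Q = BQ equals Q*). Then Q* is group-invariant: Q*(g•h, g•a) = Q*(h, a) for all g ∈ G, h ∈ H, a ∈ A. -/

import Mathlib

open scoped NNReal

/-- A group-invariant POMDP over finite types of states `S`, actions `A`,
and observations `Ω`, with a group `G` acting on each. -/
structure GIPOMDP (G S A Ω : Type) [Group G] [MulAction G S] [MulAction G A] [MulAction G Ω]
    [Fintype S] [Fintype A] [Fintype Ω] where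
  b0 : S → ℝ≥0
  T : S → A → S → ℝ≥0
  R : S → A → ℝ
  O0 : S → Ω → ℝ≥0
  O : A → S → Ω → ℝ≥0
  b0_sum : ∑ s, b0 s = 1
  b0_inv : ∀ (g : G) (s : S), b0 (g • s) = b0 s
  T_sum : ∀ (s : S) (a : A), ∑ s', T s a s' = 1
  T_inv : ∀ (g : G) (s : S) (a : A) (s' : S), T (g • s) (g • a) (g • s') = T s a s'
  R_inv : ∀ (g : G) (s : S) (a : A), R (g • s) (g • a) = R s a
  O0_sum : ∀ s : S, ∑ o, O0 s o = 1
  O0_inv : ∀ (g : G) (s : S) (o : Ω), O0 (g • s) (g • o) = O0 s o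
  O_sum : ∀ (a : A) (s' : S), ∑ o, O a s' o = 1
  O_inv : ∀ (g : G) (a : A) (s' : S) (o : Ω), O (g • a) (g • s') (g • o) = O a s' o

/-- A history: an initial observation followed by a list of action–observation pairs. -/
abbrev Hist (A Ω : Type) : Type := Ω × List (A × Ω)

variable {G S A Ω : Type} [Group G] [MulAction G S] [MulAction G A] [MulAction G Ω]
  [Fintype S] [Fintype A] [Fintype Ω]

/-- Componentwise group action on histories. -/
def histAct (g : G) (h : Hist A Ω) : Hist A Ω :=
  (g • h.1, h.2.map fun p => (g • p.1, g • p.2))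

/-- Appending an action–observation pair to a history: `h·(a,o)`. -/
def snocH (h : Hist A Ω) (a : A) (o : Ω) : Hist A Ω :=
  (h.1, h.2 ++ [(a, o)])

/-- Unnormalized filter weight, by recursion on the reversed action–observation list. -/
noncomputable def wRev (P : GIPOMDP G S A Ω) (o0 : Ω) : List (A × Ω) → S → ℝ≥0
  | [] => fun s => P.b0 s * P.O0 s o0
  | (a, o) :: rest => fun s' => (∑ s, wRev P o0 rest s * P.T s a s') * P.O a s' o

/-- Unnormalized filter weight `w_h(s)`: `w_{(o0,[])}(s) = b0(s)·O0(s,o0)` and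
`w_{h·(a,o)}(s') = (Σ_s w_h(s)·T(s,a,s'))·O(a,s',o)`. -/
noncomputable def w (P : GIPOMDP G S A Ω) (h : Hist A Ω) (s : S) : ℝ≥0 :=
  wRev P h.1 h.2.reverse s

/-- Belief `Pr(s|h)`, with the convention that it is `0` when the weights sum to `0`. -/
noncomputable def belief (P : GIPOMDP G S A Ω) (h : Hist A Ω) (s : S) : ℝ≥0 :=
  if 0 < ∑ s', w P h s' then w P h s / ∑ s', w P h s' else 0

/-- Conditional observation probability `Pr(o|h,a) = Σ_s Pr(s|h)·Σ_{s'} T(s,a,s')·O(a,s',o)`. -/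
noncomputable def probObs (P : GIPOMDP G S A Ω) (h : Hist A Ω) (a : A) (o : Ω) : ℝ≥0 :=
  ∑ s, belief P h s * ∑ s', P.T s a s' * P.O a s' o

open Classical in
/-- History-MDP transition function: `T̄(h,a,h') = Pr(o|h,a)` if `h' = h·(a,o)` for some `o`,
and `0` otherwise. -/
noncomputable def Tbar (P : GIPOMDP G S A Ω) (h : Hist A Ω) (a : A) (h' : Hist A Ω) : ℝ≥0 :=
  ∑ o, if h' = snocH h a o then probObs P h a o else 0

/-- History-MDP reward function `R̄(h,a) = Σ_s Pr(s|h)·R(s,a)`. -/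
noncomputable def Rbar (P : GIPOMDP G S A Ω) (h : Hist A Ω) (a : A) : ℝ :=
  ∑ s, (belief P h s : ℝ) * P.R s a

/-- Bellman optimality operator of the History-MDP:
`(BQ)(h,a) = R̄(h,a) + γ·Σ_o Pr(o|h,a)·max_{a'} Q(h·(a,o), a')`. -/
noncomputable def bellman [Nonempty A] (P : GIPOMDP G S A Ω) (γ : ℝ)
    (Q : Hist A Ω × A → ℝ) : Hist A Ω × A → ℝ :=
  fun x => Rbar P x.1 x.2 + γ * ∑ o, (probObs P x.1 x.2 o : ℝ) *
    Finset.univ.sup' Finset.univ_nonempty (fun a' => Q (snocH x.1 x.2 o, a'))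

section Aux

variable (P : GIPOMDP G S A Ω) (g : G)

lemma sum_act {X : Type} [Fintype X] [MulAction G X] {M : Type*} [AddCommMonoid M]
    (f : X → M) : ∑ x, f (g • x) = ∑ x, f x :=
  Fintype.sum_equiv (MulAction.toPerm g) _ _ (fun _ => rfl)

lemma wRev_inv (o0 : Ω) (l : List (A × Ω)) (s : S) :
    wRev P (g • o0) (l.map fun p => (g • p.1, g • p.2)) (g • s) = wRev P o0 l s := by
  induction l generalizing s with
  | nil => simp [wRev, P.b0_inv, P.O0_inv]
  | cons p rest ih =>
    obtain ⟨a, o⟩ := p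
    simp only [List.map_cons, wRev]
    rw [P.O_inv]
    congr 1
    exact (Fintype.sum_bijective (g • ·) (MulAction.bijective g) _ _
      (fun x => by rw [← ih x, ← P.T_inv g x a s])).symm

lemma w_inv (h : Hist A Ω) (s : S) : w P (histAct g h) (g • s) = w P h s := by
  have : (histAct g h).2.reverse = h.2.reverse.map fun p => (g • p.1, g • p.2) := by
    simp [histAct, List.map_reverse]
  rw [w, this, histAct, wRev_inv]; rfl

lemma sum_w_inv (h : Hist A Ω) : ∑ s, w P (histAct g h) s = ∑ s, w P h s := by
  rw [← sum_act g (fun s => w P (histAct g h) s)]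
  exact Finset.sum_congr rfl fun s _ => w_inv P g h s

lemma belief_inv (h : Hist A Ω) (s : S) :
    belief P (histAct g h) (g • s) = belief P h s := by
  rw [belief, belief, sum_w_inv, w_inv]

lemma probObs_inv (h : Hist A Ω) (a : A) (o : Ω) :
    probObs P (histAct g h) (g • a) (g • o) = probObs P h a o := by
  rw [probObs, probObs]
  refine (Fintype.sum_bijective (g • ·) (MulAction.bijective g) _ _ (fun s => ?_)).symm
  rw [belief_inv]
  congr 1
  exact Fintype.sum_bijective (g • ·) (MulAction.bijective g) _ _
    (fun s' => by
      show _ = P.T (g • s) (g • a) (g • s') * P.O (g • a) (g • s') (g • o)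
      rw [P.T_inv, P.O_inv])

lemma Rbar_inv (h : Hist A Ω) (a : A) :
    Rbar P (histAct g h) (g • a) = Rbar P h a := by
  rw [Rbar, Rbar]
  refine (Fintype.sum_bijective (g • ·) (MulAction.bijective g) _ _ (fun s => ?_)).symm
  rw [belief_inv, P.R_inv]

lemma snocH_hist (h : Hist A Ω) (a : A) (o : Ω) :
    snocH (histAct g h) (g • a) (g • o) = histAct g (snocH h a o) := by
  simp [snocH, histAct]

lemma sup'_perm [Nonempty A] (e : Equiv.Perm A) (f : A → ℝ) :
    Finset.univ.sup' Finset.univ_nonempty f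
      = Finset.univ.sup' Finset.univ_nonempty (fun a => f (e a)) := by
  apply le_antisymm
  · apply Finset.sup'_le
    intro a _
    have := Finset.le_sup' (f := fun a => f (e a)) (b := e.symm a) (Finset.mem_univ _)
    simpa only [Equiv.apply_symm_apply] using this
  · apply Finset.sup'_le
    intro a _
    exact Finset.le_sup' f (Finset.mem_univ (e a))

end Aux

/-- Theorem 1 (invariance of the optimal Q-function): if `Q*` is the unique bounded
solution of the Bellman optimality equation, then `Q*(g•h, g•a) = Q*(h, a)`. -/
theorem optimal_Q_invariant {G S A Ω : Type} [Group G] [MulAction G S] [MulAction G A] [MulAction G Ω]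
    [Fintype S] [Fintype A] [Fintype Ω] [Nonempty S] [Nonempty A] [Nonempty Ω]
    (P : GIPOMDP G S A Ω)
    (γ : ℝ) (hγ0 : 0 ≤ γ) (hγ1 : γ < 1)
    (Qstar : Hist A Ω × A → ℝ)
    (hBdd : ∃ C : ℝ, ∀ x : Hist A Ω × A, |Qstar x| ≤ C)
    (hFix : Qstar = bellman P γ Qstar)
    (hUniq : ∀ Q : Hist A Ω × A → ℝ,
      (∃ C : ℝ, ∀ x : Hist A Ω × A, |Q x| ≤ C) → Q = bellman P γ Q → Q = Qstar) :
    ∀ (g : G) (h : Hist A Ω) (a : A), Qstar (histAct g h, g • a) = Qstar (h, a) := by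
  intro g h a
  set Q' : Hist A Ω × A → ℝ := fun x => Qstar (histAct g x.1, g • x.2) with hQ'
  have hFix' : Q' = bellman P γ Q' := by
    funext x
    have hx : Q' x = (bellman P γ Qstar) (histAct g x.1, g • x.2) :=
      congrFun hFix (histAct g x.1, g • x.2)
    rw [hx]
    simp only [bellman]
    rw [Rbar_inv]
    congr 1
    congr 1
    refine (Fintype.sum_bijective (fun o : Ω => g • o) (MulAction.bijective g)
      (fun o => (probObs P x.1 x.2 o : ℝ) * Finset.univ.sup' Finset.univ_nonempty
        (fun a' => Q' (snocH x.1 x.2 o, a')))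
      (fun o => (probObs P (histAct g x.1) (g • x.2) o : ℝ) * Finset.univ.sup' Finset.univ_nonempty
        (fun a' => Qstar (snocH (histAct g x.1) (g • x.2) o, a')))
      (fun o => ?_)).symm
    beta_reduce
    rw [probObs_inv, snocH_hist]
    congr 1
    exact (sup'_perm (MulAction.toPerm g)
      (fun a' => Qstar (histAct g (snocH x.1 x.2 o), a'))).symm
  have hEq := hUniq Q' (by obtain ⟨C, hC⟩ := hBdd; exact ⟨C, fun x => hC _⟩) hFix'
  exact congrFun hEq (h, a)
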